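/- Let v > 36 be a superabundant number. Then v has a prime factorization of the form v = ∏_{j=1}^{k} p_j^{a_j} (a product over consecutive primes starting at 2) in which a_k = 1 and a_j ≥ a_{j+1} ≥ 1 for every positive integer j ≤ k−1. -/

import Mathlib

/-- Sum of the positive divisors of `n`. -/
def sigma1 (n : ℕ) : ℕ := ∑ d ∈ n.divisors, d

/-- `G n = σ(n) / (n · log log n)`. -/
noncomputable def G (n : ℕ) : ℝ := (sigma1 n : ℝ) / ((n : ℝ) * Real.log (Real.log n))

/-- `s` is superabundant: `σ(s)/s > σ(t)/t` for every positive integer `t < s`. -/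
def Superabundant (s : ℕ) : Prop :=
  0 < s ∧ ∀ t : ℕ, 0 < t → t < s → (sigma1 t : ℝ) / (t : ℝ) < (sigma1 s : ℝ) / (s : ℝ)

/-- The `j`-th prime (`1`-indexed): `nthPrime 1 = 2`, `nthPrime 2 = 3`, ... -/
noncomputable def nthPrime (j : ℕ) : ℕ := Nat.nth Nat.Prime (j - 1)

/-- The `j`-th primorialUpTo `N_j = p₁ ⋯ p_j`. -/
noncomputable def primorialUpTo (j : ℕ) : ℕ := ∏ i ∈ Finset.Icc 1 j, nthPrime i

/-- Every superabundant number `v > 36` has a prime factorization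
`v = ∏_{j=1}^{k} p_j ^ (a j)` over consecutive primes starting at `2`,
with `a k = 1` and `a j ≥ a (j+1) ≥ 1` for every positive integer `j ≤ k - 1`. -/

lemma sigma1_eq (n : ℕ) : sigma1 n = ArithmeticFunction.sigma 1 n := by
  rw [ArithmeticFunction.sigma_one_apply]; rfl

lemma sigma1_mul {x y : ℕ} (h : Nat.Coprime x y) :
    sigma1 (x * y) = sigma1 x * sigma1 y := by
  simp only [sigma1_eq]
  exact ArithmeticFunction.isMultiplicative_sigma.map_mul_of_coprime h

lemma sigma1_prime_pow {p : ℕ} (hp : p.Prime) (e : ℕ) :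
    sigma1 (p ^ e) = ∑ i ∈ Finset.range (e + 1), p ^ i := by
  rw [sigma1_eq, ArithmeticFunction.sigma_one_apply_prime_pow hp]

lemma sigma1_prime {p : ℕ} (hp : p.Prime) : sigma1 p = p + 1 := by
  have := sigma1_prime_pow hp 1
  simpa [Finset.sum_range_succ, add_comm] using this

lemma sigma1_pos {n : ℕ} (hn : 0 < n) : 0 < sigma1 n := by
  have h1 : 1 ∈ n.divisors := Nat.one_mem_divisors.2 hn.ne'
  exact lt_of_lt_of_le one_pos (Finset.single_le_sum (fun i _ => Nat.zero_le i) h1)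

lemma sa_lemma {v : ℕ} (hv : Superabundant v) {t : ℕ} (ht : 0 < t) (hlt : t < v) :
    sigma1 t * v < sigma1 v * t := by
  have h := hv.2 t ht hlt
  have hv0 : (0:ℝ) < v := by exact_mod_cast hv.1
  have ht0 : (0:ℝ) < t := by exact_mod_cast ht
  rw [div_lt_div_iff₀ ht0 hv0] at h
  exact_mod_cast h

/-- the contradiction pattern -/
lemma sa_contra {v : ℕ} (hv : Superabundant v) {t : ℕ} (ht : 0 < t) (hlt : t < v)
    (h : sigma1 v * t ≤ sigma1 t * v) : False :=
  absurd (sa_lemma hv ht hlt) (not_lt.2 h)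

lemma sa_pos {v : ℕ} (hv : Superabundant v) : 0 < v := hv.1

lemma peel1 {v p : ℕ} (hv : v ≠ 0) (hp : p.Prime) :
    ∃ m, v = p ^ v.factorization p * m ∧ ¬ p ∣ m ∧
      ∀ q : ℕ, q ≠ p → m.factorization q = v.factorization q := by
  refine ⟨ordCompl[p] v, ?_, Nat.not_dvd_ordCompl hp hv, ?_⟩
  · exact (Nat.ordProj_mul_ordCompl_eq_self v p).symm
  · intro q hq
    rw [Nat.factorization_ordCompl v p]
    exact Finsupp.erase_ne hq

lemma peel2 {v p q : ℕ} (hv : v ≠ 0) (hp : p.Prime) (hq : q.Prime) (hne : p ≠ q) :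
    ∃ m, v = p ^ v.factorization p * (q ^ v.factorization q * m) ∧ ¬ p ∣ m ∧ ¬ q ∣ m := by
  obtain ⟨m₁, hv1, hpm₁, hfz⟩ := peel1 hv hp
  have hm₁ : m₁ ≠ 0 := by rintro rfl; simp at hv1; exact hv (by simpa using hv1)
  obtain ⟨m, hm1, hqm, _⟩ := peel1 hm₁ hq
  have hpm : ¬ p ∣ m := fun h => hpm₁ (by rw [hm1]; exact h.mul_left _)
  refine ⟨m, ?_, hpm, hqm⟩
  have he := hv1
  rw [hm1] at he
  rwa [hfz q (Ne.symm hne)] at he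

lemma coprime_of_not_dvd {p m : ℕ} (hp : p.Prime) (h : ¬ p ∣ m) : Nat.Coprime p m :=
  (Nat.Prime.coprime_iff_not_dvd hp).2 h

lemma sigma1_ge_one {n : ℕ} (hn : 0 < n) : 1 ≤ sigma1 n := sigma1_pos hn

/-- If `q ∣ v`, `v` superabundant, `p < q` prime, then `p ∣ v`. -/
lemma support_closed {v : ℕ} (hv : Superabundant v) {p q : ℕ} (hp : p.Prime) (hq : q.Prime)
    (hpq : p < q) (hqv : q ∣ v) : p ∣ v := by
  by_contra hpv
  have hv0 : v ≠ 0 := (sa_pos hv).ne'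
  obtain ⟨m, hvm, hqm, -⟩ := peel1 hv0 hq
  have hb : 1 ≤ v.factorization q := (Nat.Prime.factorization_pos_of_dvd hq hv0 hqv)
  obtain ⟨b, hb'⟩ : ∃ b, v.factorization q = b + 1 := ⟨_, (Nat.succ_pred_eq_of_pos hb).symm⟩
  rw [hb'] at hvm
  have hm0 : m ≠ 0 := by rintro rfl; simp at hvm; exact hv0 hvm
  have hm0' : 0 < m := Nat.pos_of_ne_zero hm0
  set w := q ^ b * m with hw
  have hvw : v = q * w := by rw [hvm, hw]; ring
  have hw0 : 0 < w := Nat.mul_pos (pow_pos hq.pos b) hm0'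
  have hpm : ¬ p ∣ m := fun h => hpv (h.trans (Dvd.intro_left _ hvm.symm))
  -- v' = p * w
  have hlt : p * w < v := by rw [hvw]; exact (Nat.mul_lt_mul_right hw0).2 hpq
  refine sa_contra hv (Nat.mul_pos hp.pos hw0) hlt ?_
  -- sigma computations
  have hqS : Nat.Coprime (q ^ (b+1)) m := Nat.Coprime.pow_left _ (coprime_of_not_dvd hq hqm)
  have hσv : sigma1 v = sigma1 (q ^ (b+1)) * sigma1 m := by rw [hvm]; exact sigma1_mul hqS
  have hpqm : Nat.Coprime p (q ^ b * m) := by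
    refine Nat.Coprime.mul_right (Nat.Coprime.pow_right _ ?_) (coprime_of_not_dvd hp hpm)
    exact (Nat.coprime_primes hp hq).2 hpq.ne
  have hσv' : sigma1 (p * w) = (p + 1) * (sigma1 (q ^ b) * sigma1 m) := by
    rw [sigma1_mul hpqm, sigma1_prime hp, sigma1_mul (Nat.Coprime.pow_left _ (coprime_of_not_dvd hq hqm))]
  -- reduce to numeric inequality
  rw [hσv, hσv', hvw]
  have hgs : sigma1 (q ^ (b+1)) = q * sigma1 (q ^ b) + 1 := by
    rw [sigma1_prime_pow hq, sigma1_prime_pow hq, geom_sum_succ]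
  rw [hgs]
  set S := sigma1 (q ^ b) with hS
  have hS1 : 1 ≤ S := sigma1_ge_one (pow_pos hq.pos b)
  have key : (q * S + 1) * p ≤ (p + 1) * S * q := by nlinarith [hpq.le, hp.two_le]
  calc (q * S + 1) * sigma1 m * (p * w) = ((q * S + 1) * p) * (sigma1 m * w) := by ring
    _ ≤ ((p + 1) * S * q) * (sigma1 m * w) := Nat.mul_le_mul_right _ key
    _ = (p + 1) * (S * sigma1 m) * (q * w) := by ring

lemma pow_sub_pow_le_aux (p q : ℤ) (h0 : 0 ≤ p) (hpq : p ≤ q) (c : ℕ) :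
    q ^ c - p ^ c ≤ (c : ℤ) * (q - p) * q ^ (c - 1) := by
  have hgs := geom_sum₂_mul q p c
  have hq0 : 0 ≤ q := h0.trans hpq
  have hb : (∑ i ∈ Finset.range c, q ^ i * p ^ (c - 1 - i)) ≤ (c : ℤ) * q ^ (c - 1) := by
    have := Finset.sum_le_card_nsmul (Finset.range c)
      (fun i => q ^ i * p ^ (c - 1 - i)) (q ^ (c - 1)) ?_
    · simpa [nsmul_eq_mul] using this
    · intro i hi
      have hi' : i < c := Finset.mem_range.1 hi
      calc q ^ i * p ^ (c - 1 - i) ≤ q ^ i * q ^ (c - 1 - i) := by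
            exact mul_le_mul_of_nonneg_left (pow_le_pow_left₀ h0 hpq _) (pow_nonneg hq0 _)
        _ = q ^ (i + (c - 1 - i)) := (pow_add q i _).symm
        _ = q ^ (c - 1) := by congr 1; omega
  calc q ^ c - p ^ c = (∑ i ∈ Finset.range c, q ^ i * p ^ (c - 1 - i)) * (q - p) := hgs.symm
    _ ≤ ((c : ℤ) * q ^ (c - 1)) * (q - p) := by
        exact mul_le_mul_of_nonneg_right hb (by linarith)
    _ = (c : ℤ) * (q - p) * q ^ (c - 1) := by ring

lemma swap_core' (p q : ℤ) (hp : 2 ≤ p) (hpq : p < q) (a c : ℕ) (hc : 1 ≤ c) :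
    (p ^ (a + 1) - 1) * (q ^ (a + c + 1) - 1) * p ^ c
      ≤ (p ^ (a + c + 1) - 1) * (q ^ (a + 1) - 1) * q ^ c := by
  have hq2 : 2 ≤ q := by linarith
  have hp0 : (0:ℤ) ≤ p := by linarith
  have hq0 : (0:ℤ) ≤ q := by linarith
  set pa := p ^ a with hpa
  set qa := q ^ a with hqa
  set P := p ^ c with hP
  set Q := q ^ c with hQ
  have hpa0 : 0 < pa := pow_pos (by linarith) a
  have hqa0 : 0 < qa := pow_pos (by linarith) a
  have hP1 : 1 ≤ P := one_le_pow₀ (by linarith : (1:ℤ) ≤ p)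
  have hQ1 : 1 ≤ Q := one_le_pow₀ (by linarith : (1:ℤ) ≤ q)
  have hPa : p ^ (a+1) = p * pa := by rw [hpa]; ring
  have hQa : q ^ (a+1) = q * qa := by rw [hqa]; ring
  have hPaP : p ^ (a+c+1) = p * pa * P := by rw [hpa, hP]; ring
  have hQaQ : q ^ (a+c+1) = q * qa * Q := by rw [hqa, hQ]; ring
  have hpaqa : pa ≤ qa := pow_le_pow_left₀ hp0 hpq.le a
  -- h1 : q*qa - p*pa ≥ (q-p) * qa
  have h1 : (q - p) * qa ≤ q * qa - p * pa := by
    have : p * pa ≤ p * qa := mul_le_mul_of_nonneg_left hpaqa (by linarith)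
    nlinarith
  -- h2 : Q - P ≤ c (q-p) q^(c-1)
  have h2 : Q - P ≤ (c:ℤ) * (q - p) * q ^ (c - 1) := pow_sub_pow_le_aux p q hp0 hpq.le c
  -- h3 : c ≤ P - 1
  have h3 : (c:ℤ) ≤ P - 1 := by
    have h2c : c < 2 ^ c := Nat.lt_two_pow_self
    have h2p : (2:ℤ) ^ c ≤ p ^ c := pow_le_pow_left₀ (by norm_num) hp c
    have : (c:ℤ) < 2 ^ c := by exact_mod_cast h2c
    rw [hP]; linarith
  -- bounds for the two sides
  have hQc1 : Q = q * q ^ (c - 1) := by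
    rw [hQ, ← pow_succ']
    congr 1
    omega
  have hq1c0 : (0:ℤ) ≤ q ^ (c-1) := pow_nonneg hq0 _
  have hqp0 : (0:ℤ) ≤ q - p := by linarith
  have hPa1 : p * pa - 1 ≤ q * qa := by nlinarith
  have hQP0 : 0 ≤ Q - P := by
    have := pow_le_pow_left₀ hp0 hpq.le c
    rw [hP, hQ]; linarith
  have hside1 : (p * pa - 1) * (Q - P) ≤ (q * qa) * ((c:ℤ) * (q - p) * q ^ (c-1)) :=
    mul_le_mul hPa1 h2 hQP0 (by positivity)
  have hside2 : Q * ((c:ℤ) * ((q - p) * qa)) ≤ Q * ((P - 1) * (q * qa - p * pa)) := by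
    have hc0 : (0:ℤ) ≤ (c:ℤ) := by positivity
    have h1' : (0:ℤ) ≤ (q-p) * qa := by positivity
    refine mul_le_mul_of_nonneg_left ?_ (by positivity)
    exact mul_le_mul h3 h1 h1' (by linarith)
  have hkey : (p * pa - 1) * (Q - P) ≤ Q * ((P - 1) * (q * qa - p * pa)) := by
    calc (p * pa - 1) * (Q - P) ≤ (q * qa) * ((c:ℤ) * (q - p) * q ^ (c-1)) := hside1
      _ = Q * ((c:ℤ) * ((q - p) * qa)) := by rw [hQc1]; ring
      _ ≤ Q * ((P - 1) * (q * qa - p * pa)) := hside2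
  rw [hPa, hQa, hPaP, hQaQ]
  nlinarith [hkey]

lemma swap_sum (p q a b : ℕ) (hp : 2 ≤ p) (hpq : p < q) (hab : a < b) :
    (∑ i ∈ Finset.range (a+1), p^i) * (∑ i ∈ Finset.range (b+1), q^i) * (p^b * q^a)
      ≤ (∑ i ∈ Finset.range (b+1), p^i) * (∑ i ∈ Finset.range (a+1), q^i) * (p^a * q^b) := by
  obtain ⟨c, hc, rfl⟩ : ∃ c, 1 ≤ c ∧ b = a + c := ⟨b - a, by omega, by omega⟩
  have hpZ : (2:ℤ) ≤ (p:ℤ) := by exact_mod_cast hp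
  have hpqZ : (p:ℤ) < (q:ℤ) := by exact_mod_cast hpq
  have key := mul_le_mul_of_nonneg_right (swap_core' p q hpZ hpqZ a c hc)
    (by positivity : (0:ℤ) ≤ (p:ℤ)^a * (q:ℤ)^a)
  have hposd : (0:ℤ) < ((p:ℤ) - 1) * ((q:ℤ) - 1) := by nlinarith
  have goalZ : ((∑ i ∈ Finset.range (a+1), (p:ℤ)^i) * (∑ i ∈ Finset.range (a+c+1), (q:ℤ)^i) * ((p:ℤ)^(a+c) * (q:ℤ)^a))
      ≤ ((∑ i ∈ Finset.range (a+c+1), (p:ℤ)^i) * (∑ i ∈ Finset.range (a+1), (q:ℤ)^i) * ((p:ℤ)^a * (q:ℤ)^(a+c))) := by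
    refine le_of_mul_le_mul_right ?_ hposd
    have e1 := geom_sum_mul (p:ℤ) (a+1)
    have e2 := geom_sum_mul (q:ℤ) (a+c+1)
    have e3 := geom_sum_mul (p:ℤ) (a+c+1)
    have e4 := geom_sum_mul (q:ℤ) (a+1)
    calc (∑ i ∈ Finset.range (a+1), (p:ℤ)^i) * (∑ i ∈ Finset.range (a+c+1), (q:ℤ)^i) * ((p:ℤ)^(a+c) * (q:ℤ)^a) * (((p:ℤ) - 1) * ((q:ℤ) - 1))
        = ((∑ i ∈ Finset.range (a+1), (p:ℤ)^i) * ((p:ℤ)-1)) * ((∑ i ∈ Finset.range (a+c+1), (q:ℤ)^i) * ((q:ℤ)-1)) * ((p:ℤ)^(a+c) * (q:ℤ)^a) := by ring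
      _ = ((p:ℤ)^(a+1) - 1) * ((q:ℤ)^(a+c+1) - 1) * ((p:ℤ)^(a+c) * (q:ℤ)^a) := by rw [e1, e2]
      _ ≤ ((p:ℤ)^(a+c+1) - 1) * ((q:ℤ)^(a+1) - 1) * ((p:ℤ)^a * (q:ℤ)^(a+c)) := by
          calc ((p:ℤ)^(a+1) - 1) * ((q:ℤ)^(a+c+1) - 1) * ((p:ℤ)^(a+c) * (q:ℤ)^a)
              = ((p:ℤ)^(a+1) - 1) * ((q:ℤ)^(a+c+1) - 1) * (p:ℤ)^c * ((p:ℤ)^a * (q:ℤ)^a) := by ring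
            _ ≤ ((p:ℤ)^(a+c+1) - 1) * ((q:ℤ)^(a+1) - 1) * (q:ℤ)^c * ((p:ℤ)^a * (q:ℤ)^a) := key
            _ = ((p:ℤ)^(a+c+1) - 1) * ((q:ℤ)^(a+1) - 1) * ((p:ℤ)^a * (q:ℤ)^(a+c)) := by ring
      _ = ((∑ i ∈ Finset.range (a+c+1), (p:ℤ)^i) * ((p:ℤ)-1)) * ((∑ i ∈ Finset.range (a+1), (q:ℤ)^i) * ((q:ℤ)-1)) * ((p:ℤ)^a * (q:ℤ)^(a+c)) := by rw [e3, e4]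
      _ = (∑ i ∈ Finset.range (a+c+1), (p:ℤ)^i) * (∑ i ∈ Finset.range (a+1), (q:ℤ)^i) * ((p:ℤ)^a * (q:ℤ)^(a+c)) * (((p:ℤ) - 1) * ((q:ℤ) - 1)) := by ring
  exact_mod_cast goalZ

lemma factorization_anti {v : ℕ} (hv : Superabundant v) {p q : ℕ} (hp : p.Prime) (hq : q.Prime)
    (hpq : p < q) (hqv : q ∣ v) : v.factorization q ≤ v.factorization p := by
  by_contra hab
  push_neg at hab
  set a := v.factorization p with ha
  set b := v.factorization q with hbdef
  have hv0 : v ≠ 0 := (sa_pos hv).ne'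
  have hne : p ≠ q := hpq.ne
  obtain ⟨m, hvm, hpm, hqm⟩ := peel2 hv0 hp hq hne
  rw [← ha, ← hbdef] at hvm
  clear_value a b
  have hm0 : 0 < m := by
    rcases Nat.eq_zero_or_pos m with h | h
    · subst h; simp at hvm; exact absurd hvm hv0
    · exact h
  -- coprimality
  have hcpq : Nat.Coprime p q := (Nat.coprime_primes hp hq).2 hne
  have hcpm : Nat.Coprime p m := coprime_of_not_dvd hp hpm
  have hcqm : Nat.Coprime q m := coprime_of_not_dvd hq hqm
  have hσ : ∀ x y : ℕ, sigma1 (p ^ x * (q ^ y * m)) =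
      sigma1 (p ^ x) * (sigma1 (q ^ y) * sigma1 m) := by
    intro x y
    rw [sigma1_mul, sigma1_mul (hcqm.pow_left _)]
    exact Nat.Coprime.mul_right (Nat.Coprime.pow _ _ hcpq) (Nat.Coprime.pow_left _ hcpm)
  -- v' with swapped exponents
  set v' := p ^ b * (q ^ a * m) with hv'
  have hlt : v' < v := by
    rw [hvm, hv']
    have : p ^ b * q ^ a < p ^ a * q ^ b := by
      obtain ⟨c, hc, rfl⟩ : ∃ c, 1 ≤ c ∧ b = a + c := ⟨b - a, by omega, by omega⟩
      have h1 : p ^ c < q ^ c := by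
        apply Nat.pow_lt_pow_left hpq (by omega)
      calc p ^ (a+c) * q ^ a = p ^ a * q ^ a * p ^ c := by ring
        _ < p ^ a * q ^ a * q ^ c := by
            have hpos : 0 < p ^ a * q ^ a := Nat.mul_pos (pow_pos hp.pos a) (pow_pos hq.pos a)
            exact (Nat.mul_lt_mul_left hpos).mpr h1
        _ = p ^ a * q ^ (a+c) := by ring
    calc p ^ b * (q ^ a * m) = (p ^ b * q ^ a) * m := by ring
      _ < (p ^ a * q ^ b) * m := (Nat.mul_lt_mul_right hm0).mpr this
      _ = p ^ a * (q ^ b * m) := by ring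
  refine sa_contra hv ?_ hlt ?_
  · exact Nat.mul_pos (pow_pos hp.pos b) (Nat.mul_pos (pow_pos hq.pos a) hm0)
  rw [hvm, hv', hσ, hσ, sigma1_prime_pow hp, sigma1_prime_pow hp, sigma1_prime_pow hq,
    sigma1_prime_pow hq]
  have key := swap_sum p q a b hp.two_le hpq hab
  calc (∑ i ∈ Finset.range (a+1), p^i) * ((∑ i ∈ Finset.range (b+1), q^i) * sigma1 m) * (p ^ b * (q ^ a * m))
      = ((∑ i ∈ Finset.range (a+1), p^i) * (∑ i ∈ Finset.range (b+1), q^i) * (p^b * q^a)) * (sigma1 m * m) := by ring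
    _ ≤ ((∑ i ∈ Finset.range (b+1), p^i) * (∑ i ∈ Finset.range (a+1), q^i) * (p^a * q^b)) * (sigma1 m * m) := Nat.mul_le_mul_right _ key
    _ = (∑ i ∈ Finset.range (b+1), p^i) * ((∑ i ∈ Finset.range (a+1), q^i) * sigma1 m) * (p ^ a * (q ^ b * m)) := by ring

lemma AB_core (q' q r A B : ℤ) (hq'4 : 4 ≤ q') (hq7 : 7 ≤ q) (h1 : q + 1 ≤ 2 * q')
    (h3 : q < r) (h4 : r + 1 ≤ 2 * q) (hA : q' * q' + q' ≤ A) (hB : q * q + q ≤ B) :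
    r * (A + B + 1) ≤ A * B := by
  have har : 7 ≤ A - r := by
    nlinarith [mul_nonneg (by linarith : (0:ℤ) ≤ q' - 4) (by linarith : (0:ℤ) ≤ q' + 1)]
  have hbr : q * q - q + 1 ≤ B - r := by linarith
  have hq0 : (0:ℤ) ≤ q * q - q + 1 := by nlinarith
  have key : 7 * (q * q - q + 1) ≤ (A - r) * (B - r) := by
    exact mul_le_mul har hbr hq0 (by linarith)
  have hr0 : (0:ℤ) ≤ r := by linarith
  have hrb : r * r + r ≤ 4 * q * q - 2 * q := by nlinarith [sq_nonneg (2 * q - 1 - r)]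
  nlinarith [key, hrb]

lemma AB_ineq {q' q r A B : ℕ} (hq' : q'.Prime) (hq : q.Prime) (hr : r.Prime)
    (h1 : q + 1 ≤ 2 * q') (h2 : q' < q) (h3 : q < r) (h4 : r ≤ 2 * q - 1)
    (hA : q' * q' + q' ≤ A) (hB : q * q + q ≤ B) (hA2 : q' = 2 → 14 ≤ A) :
    r * (A + B + 1) ≤ A * B := by
  have hq'2 : 2 ≤ q' := hq'.two_le
  have hq3 : 3 ≤ q := by omega
  rcases eq_or_lt_of_le hq3 with hq3' | hq5
  · -- q = 3, q' = 2, r = 5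
    have hq'2' : q' = 2 := by omega
    subst hq3'
    have hr5 : r = 5 := by
      have : r ≠ 4 := by rintro rfl; norm_num at hr
      omega
    have hA14 := hA2 hq'2'
    subst hr5
    have hB12 : 12 ≤ B := by omega
    nlinarith [mul_le_mul hA14 hB12 (by norm_num) (by omega : 0 ≤ A)]
  · have hq4 : q ≠ 4 := by rintro rfl; norm_num at hq
    rcases eq_or_lt_of_le (by omega : 5 ≤ q) with hq5' | hq7
    · have hq'3 : q' = 3 := by
        have : q' ≠ 4 := by rintro rfl; norm_num at hq'
        omega
      have hr7 : r = 7 := by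
        have h8 : r ≠ 8 := by rintro rfl; norm_num at hr
        have h9 : r ≠ 9 := by rintro rfl; norm_num at hr
        have h6 : r ≠ 6 := by rintro rfl; norm_num at hr
        omega
      subst hr7
      subst hq'3
      rw [← hq5'] at hB
      have hA12 : 12 ≤ A := by omega
      have hB30 : 30 ≤ B := by omega
      nlinarith [mul_le_mul hA12 hB30 (by norm_num) (by omega : 0 ≤ A)]
    · -- q ≥ 7
      have hq7' : 7 ≤ q := by
        have : q ≠ 6 := by rintro rfl; norm_num at hq
        omega
      have hq'4 : 4 ≤ q' := by omega
      have h4' : r + 1 ≤ 2 * q := by omega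
      have := AB_core (q':ℤ) q r A B (by exact_mod_cast hq'4) (by exact_mod_cast hq7')
        (by exact_mod_cast h1) (by exact_mod_cast h3) (by exact_mod_cast h4')
        (by exact_mod_cast hA) (by exact_mod_cast hB)
      exact_mod_cast this

/-- geometric sum step -/
lemma gs_succ {p : ℕ} (hp : p.Prime) (e : ℕ) :
    sigma1 (p ^ (e + 1)) = p * sigma1 (p ^ e) + 1 := by
  rw [sigma1_prime_pow hp, sigma1_prime_pow hp, geom_sum_succ]

lemma sigma1_pow_lb {p : ℕ} (hp : p.Prime) {e : ℕ} (he : 1 ≤ e) :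
    p + 1 ≤ sigma1 (p ^ e) := by
  obtain ⟨f, rfl⟩ : ∃ f, e = f + 1 := ⟨e - 1, by omega⟩
  rw [gs_succ hp]
  have h1 : 1 ≤ sigma1 (p ^ f) := sigma1_pos (pow_pos hp.pos f)
  nlinarith [hp.pos]

/-- The two-prime move: if `q' < q < r` are primes, `r ∤ v`, `q' q ∣ v` with exponents `a, c ≥ 1`,
`r < q' * q`, and the numeric inequality holds, then contradiction with superabundance. -/
lemma top_move {v : ℕ} (hv : Superabundant v) {q' q r : ℕ}
    (hq' : q'.Prime) (hq : q.Prime) (hr : r.Prime)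
    (hq'q : q' < q) (hqr : q < r) (hrqq' : r < q' * q)
    (hq'v : q' ∣ v) (hqv : q ∣ v) (hrv : ¬ r ∣ v)
    (hnum : r * ((q' * sigma1 (q' ^ (v.factorization q' - 1))) +
        (q * sigma1 (q ^ (v.factorization q - 1))) + 1)
      ≤ (q' * sigma1 (q' ^ (v.factorization q' - 1))) *
        (q * sigma1 (q ^ (v.factorization q - 1)))) : False := by
  have hv0 : v ≠ 0 := (sa_pos hv).ne'
  have hane : q' ≠ q := hq'q.ne
  obtain ⟨m, hvm, hq'm, hqm⟩ := peel2 hv0 hq' hq hane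
  have ha1 : 1 ≤ v.factorization q' := hq'.factorization_pos_of_dvd hv0 hq'v
  have hc1 : 1 ≤ v.factorization q := hq.factorization_pos_of_dvd hv0 hqv
  obtain ⟨a, haa⟩ : ∃ a, v.factorization q' = a + 1 := ⟨_, (Nat.succ_pred_eq_of_pos ha1).symm⟩
  obtain ⟨c, hcc⟩ : ∃ c, v.factorization q = c + 1 := ⟨_, (Nat.succ_pred_eq_of_pos hc1).symm⟩
  rw [haa, hcc] at hvm
  rw [haa, hcc] at hnum
  simp only [Nat.add_sub_cancel] at hnum
  have hm0 : 0 < m := by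
    rcases Nat.eq_zero_or_pos m with h | h
    · subst h; simp at hvm; exact absurd hvm hv0
    · exact h
  -- r does not divide m, and r ≠ q', q
  have hrm : ¬ r ∣ m := fun h => hrv (h.trans ⟨q' ^ (a+1) * q ^ (c+1), by rw [hvm]; ring⟩)
  have hrq' : r ≠ q' := by omega
  have hrq : r ≠ q := by omega
  -- coprimality package
  have hcq'q : Nat.Coprime q' q := (Nat.coprime_primes hq' hq).2 hane
  have hcq'm : Nat.Coprime q' m := coprime_of_not_dvd hq' hq'm
  have hcqm : Nat.Coprime q m := coprime_of_not_dvd hq hqm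
  have hcrq' : Nat.Coprime r q' := (Nat.coprime_primes hr hq').2 hrq'
  have hcrq : Nat.Coprime r q := (Nat.coprime_primes hr hq).2 hrq
  have hcrm : Nat.Coprime r m := coprime_of_not_dvd hr hrm
  -- v' = q'^a * (q^c * (r * m))
  set v' := q' ^ a * (q ^ c * (r * m)) with hv'def
  have hv'0 : 0 < v' := by
    have := pow_pos hq'.pos a
    have := pow_pos hq.pos c
    have := hr.pos
    positivity
  have hlt : v' < v := by
    have hW : 0 < q' ^ a * q ^ c * m :=
      Nat.mul_pos (Nat.mul_pos (pow_pos hq'.pos a) (pow_pos hq.pos c)) hm0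
    calc v' = r * (q' ^ a * q ^ c * m) := by rw [hv'def]; ring
      _ < (q' * q) * (q' ^ a * q ^ c * m) := (Nat.mul_lt_mul_right hW).mpr hrqq'
      _ = q' ^ (a+1) * (q ^ (c+1) * m) := by ring
      _ = v := hvm.symm
  refine sa_contra hv hv'0 hlt ?_
  -- sigma values
  have hσv : sigma1 v = sigma1 (q' ^ (a+1)) * (sigma1 (q ^ (c+1)) * sigma1 m) := by
    rw [hvm, sigma1_mul, sigma1_mul (Nat.Coprime.pow_left _ hcqm)]
    exact Nat.Coprime.mul_right (Nat.Coprime.pow _ _ hcq'q) (Nat.Coprime.pow_left _ hcq'm)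
  have hσv' : sigma1 v' = sigma1 (q' ^ a) * (sigma1 (q ^ c) * ((r + 1) * sigma1 m)) := by
    rw [hv'def, sigma1_mul, sigma1_mul, sigma1_mul hcrm, sigma1_prime hr]
    · exact Nat.Coprime.mul_right (Nat.Coprime.pow_left _ hcrq.symm)
        (Nat.Coprime.pow_left _ hcqm)
    · exact Nat.Coprime.mul_right (Nat.Coprime.pow _ _ hcq'q)
        (Nat.Coprime.mul_right (Nat.Coprime.pow_left _ hcrq'.symm)
          (Nat.Coprime.pow_left _ hcq'm))
  have core : sigma1 (q' ^ (a+1)) * sigma1 (q ^ (c+1)) * r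
      ≤ sigma1 (q' ^ a) * sigma1 (q ^ c) * (r + 1) * (q' * q) := by
    rw [gs_succ hq', gs_succ hq]
    nlinarith [hnum]
  rw [hσv, hσv', hvm, hv'def]
  calc sigma1 (q' ^ (a+1)) * (sigma1 (q ^ (c+1)) * sigma1 m) * (q' ^ a * (q ^ c * (r * m)))
      = (sigma1 (q' ^ (a+1)) * sigma1 (q ^ (c+1)) * r) * (sigma1 m * (q' ^ a * q ^ c * m)) := by ring
    _ ≤ (sigma1 (q' ^ a) * sigma1 (q ^ c) * (r + 1) * (q' * q)) * (sigma1 m * (q' ^ a * q ^ c * m)) :=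
        Nat.mul_le_mul_right _ core
    _ = sigma1 (q' ^ a) * (sigma1 (q ^ c) * ((r + 1) * sigma1 m)) * (q' ^ (a+1) * (q ^ (c+1) * m)) := by ring

lemma pow2_move {v : ℕ} (hv : Superabundant v) {e : ℕ} (he : 3 ≤ e) (hve : v = 2 ^ e) :
    False := by
  obtain ⟨f, rfl⟩ : ∃ f, e = f + 3 := ⟨e - 3, by omega⟩
  set X := 2 ^ f with hX
  have hX1 : 1 ≤ X := Nat.one_le_two_pow
  set t := 3 * 2 ^ (f + 1) with ht
  have hlt : t < v := by
    rw [ht, hve]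
    have : (3:ℕ) * 2 ^ (f+1) = 6 * X := by rw [hX]; ring
    have h2 : (2:ℕ) ^ (f+3) = 8 * X := by rw [hX]; ring
    rw [this, h2]
    omega
  refine sa_contra hv (by positivity) hlt ?_
  have hc : Nat.Coprime 3 (2 ^ (f+1)) :=
    Nat.Coprime.pow_right _ (by norm_num)
  have hσt : sigma1 t = 4 * sigma1 (2 ^ (f+1)) := by
    rw [ht, sigma1_mul hc, sigma1_prime (by norm_num)]
  set S := sigma1 (2 ^ f) with hS
  have hS1 : 1 ≤ S := sigma1_pos (pow_pos (by norm_num) f)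
  have h1 : sigma1 (2 ^ (f+1)) = 2 * S + 1 := by rw [gs_succ Nat.prime_two, hS]
  have h2 : sigma1 (2 ^ (f+2)) = 2 * (2 * S + 1) + 1 := by
    rw [show f + 2 = (f+1)+1 from rfl, gs_succ Nat.prime_two, h1]
  have h3 : sigma1 (2 ^ (f+3)) = 2 * (2 * (2 * S + 1) + 1) + 1 := by
    rw [show f + 3 = (f+2)+1 from rfl, gs_succ Nat.prime_two, h2]
  rw [hve, hσt, h1, h3, ht]
  have e1 : (3:ℕ) * 2 ^ (f+1) = 6 * X := by rw [hX]; ring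
  have e2 : (2:ℕ) ^ (f+3) = 8 * X := by rw [hX]; ring
  rw [e1, e2]
  nlinarith [hS1, hX1]

lemma support_eq {S : Finset ℕ} (hprime : ∀ p ∈ S, p.Prime)
    (hclosed : ∀ p q : ℕ, p.Prime → q.Prime → p < q → q ∈ S → p ∈ S) :
    S = (Finset.range S.card).image (Nat.nth Nat.Prime) := by
  rcases S.eq_empty_or_nonempty with rfl | hS
  · simp
  have hinf := Nat.infinite_setOf_prime
  have hmono := Nat.nth_strictMono hinf
  -- every element's count is < card
  have hcount : ∀ p ∈ S, Nat.count Nat.Prime p < S.card := by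
    intro p hp
    have hpp := hprime p hp
    have hsub : (Finset.range (Nat.count Nat.Prime p + 1)).image (Nat.nth Nat.Prime) ⊆ S := by
      intro x hx
      obtain ⟨j, hj, rfl⟩ := Finset.mem_image.1 hx
      have hj' : j ≤ Nat.count Nat.Prime p := by
        simpa [Nat.lt_succ_iff] using Finset.mem_range.1 hj
      have hle : Nat.nth Nat.Prime j ≤ p := by
        calc Nat.nth Nat.Prime j ≤ Nat.nth Nat.Prime (Nat.count Nat.Prime p) :=
              hmono.monotone hj'
          _ = p := Nat.nth_count hpp
      rcases eq_or_lt_of_le hle with h | h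
      · rwa [h]
      · exact hclosed _ p (Nat.prime_nth_prime j) hpp h hp
    have hcard : Nat.count Nat.Prime p + 1 ≤ S.card := by
      calc Nat.count Nat.Prime p + 1
          = ((Finset.range (Nat.count Nat.Prime p + 1)).image (Nat.nth Nat.Prime)).card := by
            rw [Finset.card_image_of_injective _ (Nat.nth_injective hinf), Finset.card_range]
        _ ≤ S.card := Finset.card_le_card hsub
    omega
  apply Finset.Subset.antisymm
  · intro p hp
    refine Finset.mem_image.2 ⟨Nat.count Nat.Prime p, Finset.mem_range.2 (hcount p hp), ?_⟩
    exact Nat.nth_count (hprime p hp)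
  · -- image ⊆ S
    intro x hx
    obtain ⟨j, hj, rfl⟩ := Finset.mem_image.1 hx
    have hj' := Finset.mem_range.1 hj
    set P := S.max' hS with hP
    have hPS : P ∈ S := S.max'_mem hS
    have hPP := hprime P hPS
    have hjle : j ≤ Nat.count Nat.Prime P := by
      have := hcount P hPS
      -- card S ≤ count P + 1
      have hsub2 : S ⊆ (Finset.range (P + 1)).filter Nat.Prime := by
        intro p hp
        refine Finset.mem_filter.2 ⟨Finset.mem_range.2 ?_, hprime p hp⟩
        exact Nat.lt_succ_of_le (S.le_max' p hp)
      have hcard2 : S.card ≤ Nat.count Nat.Prime P + 1 := by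
        calc S.card ≤ ((Finset.range (P + 1)).filter Nat.Prime).card :=
              Finset.card_le_card hsub2
          _ = Nat.count Nat.Prime (P + 1) := by
              rw [Nat.count_eq_card_filter_range]
          _ = Nat.count Nat.Prime P + 1 := by
              rw [Nat.count_succ, if_pos hPP]
      omega
    have hle : Nat.nth Nat.Prime j ≤ P := by
      calc Nat.nth Nat.Prime j ≤ Nat.nth Nat.Prime (Nat.count Nat.Prime P) := hmono.monotone hjle
        _ = P := Nat.nth_count hPP
    rcases eq_or_lt_of_le hle with h | h
    · rwa [h]
    · exact hclosed _ P (Nat.prime_nth_prime j) hPP h hPS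

lemma nth_prime_next {j P : ℕ} (hP : P.Prime) (h : Nat.nth Nat.Prime j < P) :
    Nat.nth Nat.Prime (j + 1) ≤ P := by
  have hinf := Nat.infinite_setOf_prime
  have h1 : j + 1 ≤ Nat.count Nat.Prime P := by
    have e1 : Nat.count Nat.Prime (Nat.nth Nat.Prime j + 1) = j + 1 :=
      Nat.count_nth_succ_of_infinite hinf j
    calc j + 1 = Nat.count Nat.Prime (Nat.nth Nat.Prime j + 1) := e1.symm
      _ ≤ Nat.count Nat.Prime P := Nat.count_monotone _ h
  calc Nat.nth Nat.Prime (j + 1) ≤ Nat.nth Nat.Prime (Nat.count Nat.Prime P) :=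
        (Nat.nth_strictMono hinf).monotone h1
    _ = P := Nat.nth_count hP

lemma sigma1_two_pow_lb {e : ℕ} (he : 2 ≤ e) : 7 ≤ sigma1 (2 ^ e) := by
  obtain ⟨f, rfl⟩ : ∃ f, e = f + 2 := ⟨e - 2, by omega⟩
  have h1 : 1 ≤ sigma1 (2 ^ f) := sigma1_pos (pow_pos (by norm_num) f)
  rw [show f + 2 = (f + 1) + 1 from rfl, gs_succ Nat.prime_two, gs_succ Nat.prime_two]
  omega

theorem superabundant_factorization (v : ℕ) (hv : Superabundant v) (hv36 : 36 < v) :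
    ∃ k : ℕ, 1 ≤ k ∧ ∃ a : ℕ → ℕ,
      v = ∏ j ∈ Finset.Icc 1 k, nthPrime j ^ a j ∧
      a k = 1 ∧
      ∀ j : ℕ, 1 ≤ j → j ≤ k - 1 → a (j + 1) ≤ a j ∧ 1 ≤ a (j + 1) := by
  have hinf := Nat.infinite_setOf_prime
  have hmono := Nat.nth_strictMono hinf
  have hv0 : v ≠ 0 := by omega
  have hv1 : 1 < v := by omega
  set S := v.primeFactors with hSdef
  have hSprime : ∀ p ∈ S, p.Prime := fun p hp => Nat.prime_of_mem_primeFactors hp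
  have hclosed : ∀ p q : ℕ, p.Prime → q.Prime → p < q → q ∈ S → p ∈ S := by
    intro p q hp hq hpq hqS
    exact Nat.mem_primeFactors.2 ⟨hp,
      support_closed hv hp hq hpq (Nat.dvd_of_mem_primeFactors hqS), hv0⟩
  set k := S.card with hkdef
  have hSne : S.Nonempty := Nat.nonempty_primeFactors.2 hv1
  have hk1 : 1 ≤ k := Finset.card_pos.2 hSne
  have hSeq : S = (Finset.range k).image (Nat.nth Nat.Prime) := support_eq hSprime hclosed
  -- the exponent function
  set a : ℕ → ℕ := fun j => v.factorization (nthPrime j) with ha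
  -- membership of nthPrime j for 1 ≤ j ≤ k
  have hmem : ∀ j : ℕ, 1 ≤ j → j ≤ k → nthPrime j ∈ S := by
    intro j h1 h2
    rw [hSeq]
    exact Finset.mem_image.2 ⟨j - 1, Finset.mem_range.2 (by omega), rfl⟩
  have hdvd : ∀ j : ℕ, 1 ≤ j → j ≤ k → nthPrime j ∣ v := fun j h1 h2 =>
    Nat.dvd_of_mem_primeFactors (hmem j h1 h2)
  have hprimej : ∀ j : ℕ, (nthPrime j).Prime := fun j => Nat.prime_nth_prime _
  have hapos : ∀ j : ℕ, 1 ≤ j → j ≤ k → 1 ≤ a j := by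
    intro j h1 h2
    exact (hprimej j).factorization_pos_of_dvd hv0 (hdvd j h1 h2)
  -- product formula
  have hprod : v = ∏ j ∈ Finset.Icc 1 k, nthPrime j ^ a j := by
    have h0 : v = ∏ p ∈ S, p ^ v.factorization p := by
      conv_lhs => rw [← Nat.factorization_prod_pow_eq_self hv0]
      rw [Nat.prod_factorization_eq_prod_primeFactors]
    have h1 : ∏ p ∈ S, p ^ v.factorization p
        = ∏ i ∈ Finset.range k, (Nat.nth Nat.Prime i) ^ v.factorization (Nat.nth Nat.Prime i) := by
      rw [hSeq]
      rw [Finset.prod_image (fun x _ y _ h => Nat.nth_injective hinf h)]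
    have hIcc : Finset.Icc 1 k = (Finset.range k).image (· + 1) := by
      ext x
      simp only [Finset.mem_Icc, Finset.mem_image, Finset.mem_range]
      constructor
      · rintro ⟨hx1, hx2⟩; exact ⟨x - 1, by omega, by omega⟩
      · rintro ⟨y, hy, rfl⟩; omega
    have h2 : ∏ j ∈ Finset.Icc 1 k, nthPrime j ^ a j
        = ∏ i ∈ Finset.range k, nthPrime (i + 1) ^ a (i + 1) := by
      rw [hIcc, Finset.prod_image (fun x _ y _ h => by omega)]
    rw [h0, h1, h2]
    apply Finset.prod_congr rfl
    intro i _
    have hnn : nthPrime (i + 1) = Nat.nth Nat.Prime i := by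
      simp [nthPrime]
    simp only [ha, hnn]
  -- monotone exponents
  have hanti : ∀ j : ℕ, 1 ≤ j → j + 1 ≤ k → a (j + 1) ≤ a j := by
    intro j h1 h2
    have hlt : nthPrime j < nthPrime (j + 1) := by
      have : j - 1 < j + 1 - 1 := by omega
      exact hmono this
    exact factorization_anti hv (hprimej j) (hprimej (j + 1)) hlt (hdvd (j + 1) (by omega) h2)
  -- the main claim : a k = 1
  have hak : a k = 1 := by
    by_contra hne
    have hak2 : 2 ≤ a k := by
      have := hapos k hk1 le_rfl
      omega
    -- q is the largest prime factor
    set q := nthPrime k with hq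
    have hqprime : q.Prime := hprimej k
    have hqv : q ∣ v := hdvd k hk1 le_rfl
    have hqmax : ∀ p ∈ S, p ≤ q := by
      intro p hp
      rw [hSeq] at hp
      obtain ⟨i, hi, rfl⟩ := Finset.mem_image.1 hp
      have : i ≤ k - 1 := by have := Finset.mem_range.1 hi; omega
      exact hmono.monotone this
    rcases eq_or_lt_of_le hk1 with hk1' | hk2
    · -- k = 1 : v = 2 ^ a 1
      have hv2 : v = 2 ^ a 1 := by
        rw [hprod, ← hk1']
        simp [nthPrime, Nat.nth_prime_zero_eq_two]
      have he3 : 3 ≤ a 1 := by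
        by_contra h
        have : a 1 ≤ 2 := by omega
        have : v ≤ 4 := by
          rw [hv2]
          calc 2 ^ a 1 ≤ 2 ^ 2 := Nat.pow_le_pow_right (by norm_num) this
            _ = 4 := by norm_num
        omega
      exact pow2_move hv he3 hv2
    · -- k ≥ 2
      have hk2' : 2 ≤ k := hk2
      set q' := nthPrime (k - 1) with hq'
      have hq'eq : q' = Nat.nth Nat.Prime (k - 2) := by
        rw [hq', nthPrime]
        congr 1
        all_goals omega
      have hqeq : q = Nat.nth Nat.Prime (k - 1) := rfl
      have hq'prime : q'.Prime := hprimej (k - 1)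
      have hq'q : q' < q := by
        rw [hq'eq, hqeq]
        exact hmono (by omega)
      have hq'v : q' ∣ v := hdvd (k - 1) (by omega) (by omega)
      have hq2 : 2 ≤ q' := hq'prime.two_le
      have hq3 : 3 ≤ q := by
        have := hqprime.two_le
        omega
      -- exponents
      have hc2 : 2 ≤ v.factorization q := hak2
      have ha'c : v.factorization q ≤ v.factorization q' :=
        factorization_anti hv hq'prime hqprime hq'q hqv
      have ha'2 : 2 ≤ v.factorization q' := le_trans hc2 ha'c
      -- Bertrand for r
      obtain ⟨r, hrprime, hqr, hr2q⟩ := Nat.exists_prime_lt_and_le_two_mul q (by omega)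
      have hr2q' : r ≤ 2 * q - 1 := by
        rcases eq_or_lt_of_le hr2q with h | h
        · exfalso
          have h2r : 2 ∣ r := ⟨q, h⟩
          have := (Nat.Prime.eq_one_or_self_of_dvd hrprime 2 h2r)
          omega
        · omega
      -- Bertrand for q', giving q + 1 ≤ 2 q'
      have hq2q' : q + 1 ≤ 2 * q' := by
        obtain ⟨P, hPprime, hq'P, hP2q'⟩ := Nat.exists_prime_lt_and_le_two_mul q' (by omega)
        have hqP : q ≤ P := by
          have := nth_prime_next hPprime (by rw [← hq'eq]; exact hq'P)
          have heq : k - 2 + 1 = k - 1 := by omega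
          rw [heq, ← hqeq] at this
          exact this
        have hqne : q ≠ 2 * q' := by
          intro h
          have h2q : 2 ∣ q := ⟨q', h⟩
          have := (Nat.Prime.eq_one_or_self_of_dvd hqprime 2 h2q)
          omega
        omega
      -- r not dividing v
      have hrv : ¬ r ∣ v := by
        intro h
        have hrS : r ∈ S := Nat.mem_primeFactors.2 ⟨hrprime, h, hv0⟩
        have := hqmax r hrS
        omega
      have hrqq' : r < q' * q := by
        have h2q : 2 * q ≤ q' * q := Nat.mul_le_mul_right q hq2
        omega
      -- the numeric bounds
      set A := q' * sigma1 (q' ^ (v.factorization q' - 1)) with hA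
      set B := q * sigma1 (q ^ (v.factorization q - 1)) with hB
      have hAlb : q' * q' + q' ≤ A := by
        have h1 : q' + 1 ≤ sigma1 (q' ^ (v.factorization q' - 1)) :=
          sigma1_pow_lb hq'prime (by omega)
        calc q' * q' + q' = q' * (q' + 1) := by ring
          _ ≤ q' * sigma1 (q' ^ (v.factorization q' - 1)) :=
              Nat.mul_le_mul_left _ h1
      have hBlb : q * q + q ≤ B := by
        have h1 : q + 1 ≤ sigma1 (q ^ (v.factorization q - 1)) :=
          sigma1_pow_lb hqprime (by omega)
        calc q * q + q = q * (q + 1) := by ring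
          _ ≤ q * sigma1 (q ^ (v.factorization q - 1)) := Nat.mul_le_mul_left _ h1
      have hA2 : q' = 2 → 14 ≤ A := by
        intro h2
        -- then k = 2, q = 3, and the exponent of 2 is at least 3 (else v = 36)
        have hk2'' : k = 2 := by
          have : Nat.nth Nat.Prime (k - 2) = Nat.nth Nat.Prime 0 := by
            rw [← hq'eq, h2, Nat.nth_prime_zero_eq_two]
          have := Nat.nth_injective hinf this
          omega
        have hq3' : q = 3 := by
          rw [hqeq, hk2'', Nat.nth_prime_one_eq_three]
        have ha'3 : 3 ≤ v.factorization q' := by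
          rcases eq_or_lt_of_le ha'2 with h | h
          · exfalso
            -- v = 2^2 * 3^2 = 36
            have hc2' : v.factorization q = 2 := by omega
            have hv36' : v = 36 := by
              have h1eq : nthPrime 1 = q' := by rw [hq']; congr 1; omega
              have h2eq : nthPrime 2 = q := by rw [hq]; congr 1; omega
              have ea1 : a 1 = 2 := by
                show v.factorization (nthPrime 1) = 2
                rw [h1eq]
                omega
              have ea2 : a 2 = 2 := by
                show v.factorization (nthPrime 2) = 2
                rw [h2eq]
                omega
              rw [hprod, hk2'', show Finset.Icc 1 2 = {1, 2} from rfl,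
                Finset.prod_insert (by norm_num), Finset.prod_singleton,
                ea1, ea2, h1eq, h2eq, h2, hq3']
              norm_num
            omega
          · omega
        rw [hA]
        obtain ⟨E, hE⟩ : ∃ E, v.factorization q' - 1 = E := ⟨_, rfl⟩
        rw [hE, h2]
        have hE2 : 2 ≤ E := by omega
        have h7 : 7 ≤ sigma1 (2 ^ E) := sigma1_two_pow_lb hE2
        omega
      have hnum : r * (A + B + 1) ≤ A * B :=
        AB_ineq hq'prime hqprime hrprime hq2q' hq'q hqr hr2q' hAlb hBlb hA2
      exact top_move hv hq'prime hqprime hrprime hq'q hqr hrqq' hq'v hqv hrv hnum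
  refine ⟨k, hk1, a, hprod, hak, ?_⟩
  intro j h1 h2
  exact ⟨hanti j h1 (by omega), hapos (j + 1) (by omega) (by omega)⟩
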